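/- Let F be a p-adic field (a finite extension of ℚ_p for some prime p), D a finite-dimensional central division algebra over F, m ≥ 1, and ε = fromBlocks(1_m, 0, 0, −1_m) ∈ M_{2m}(D). Suppose x = fromBlocks(A, B, P, Q) ∈ M_{2m}(D) is invertible, satisfies ε·x·ε = x⁻¹, and is semisimple. Then the matrices A, Q, B·P, P·B ∈ M_m(D) and fromBlocks(0, B, P, 0) ∈ M_{2m}(D) are all semisimple. -/

import Mathlib

open Matrix
open Polynomial

/-- The `F`-linear endomorphism `v ↦ Z · v` of `ι → D` induced by a square matrix `Z`. -/
def Matrix.mulVecEnd (F : Type*) [Field F] {D : Type*} [DivisionRing D] [Algebra F D]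
    {ι : Type*} [Fintype ι] (Z : Matrix ι ι D) :
    Module.End F (ι → D) where
  toFun v := Z.mulVec v
  map_add' u v := Matrix.mulVec_add Z u v
  map_smul' a v := by
    ext i
    simp only [Matrix.mulVec, dotProduct, RingHom.id_apply, Pi.smul_apply,
      Finset.smul_sum, mul_smul_comm]

/-- A square matrix over `D` is semisimple (relative to the base field `F`) if the induced
`F`-linear endomorphism of `ι → D` is semisimple. -/
def Matrix.IsSemisimpleMatrix (F : Type*) [Field F] {D : Type*} [DivisionRing D]
    [Algebra F D] {ι : Type*} [Fintype ι] (Z : Matrix ι ι D) : Prop :=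
  (Matrix.mulVecEnd F Z).IsSemisimple

/-- If `x = fromBlocks A B P Q` is an invertible semisimple matrix with
`ε·x·ε = x⁻¹` (where `ε = fromBlocks 1 0 0 (−1)`), then `A`, `Q`, `B·P`, `P·B` and
`fromBlocks 0 B P 0` are all semisimple. -/
lemma unit_inv_mem_adjoin_singleton {K A : Type*} [Field K] [Ring A] [Algebra K A]
    [FiniteDimensional K A] (u : Aˣ) :
    (↑u⁻¹ : A) ∈ Algebra.adjoin K {(u : A)} := by
  set S := Algebra.adjoin K {(u : A)} with hS
  have hu : (u : A) ∈ S := Algebra.self_mem_adjoin_singleton K _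
  let u' : S := ⟨u, hu⟩
  let L : S →ₗ[K] S := LinearMap.mulLeft K u'
  have hinj : Function.Injective L := by
    intro a b hab
    have h1 : (u : A) * (a : A) = (u : A) * (b : A) := congrArg Subtype.val hab
    have h2 := congrArg (fun x => (↑u⁻¹ : A) * x) h1
    simp only [← mul_assoc, Units.inv_mul, one_mul] at h2
    exact Subtype.ext h2
  have hsurj : Function.Surjective L := (LinearMap.injective_iff_surjective).mp hinj
  obtain ⟨s, hs⟩ := hsurj 1
  have hs' : (u : A) * (s : A) = 1 := congrArg Subtype.val hs
  have h3 : (↑u⁻¹ : A) = (s : A) := u.inv_eq_of_mul_eq_one_right hs'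
  rw [h3]; exact s.2

/-- `Matrix.mulVecEnd` as an `F`-algebra homomorphism. -/
def mulVecEndAlgHom (F : Type*) [Field F] {D : Type*} [DivisionRing D] [Algebra F D]
    {ι : Type*} [Fintype ι] [DecidableEq ι] :
    Matrix ι ι D →ₐ[F] Module.End F (ι → D) where
  toFun := Matrix.mulVecEnd F
  map_one' := by
    ext v i
    simp [Matrix.mulVecEnd, Matrix.one_mulVec]
  map_mul' Z W := LinearMap.ext fun v => (Matrix.mulVec_mulVec v Z W).symm
  map_zero' := by
    ext v i
    simp [Matrix.mulVecEnd]
  map_add' Z W := by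
    ext v i
    simp [Matrix.mulVecEnd, Matrix.add_mulVec]
  commutes' c := by
    ext v i
    simp [Matrix.mulVecEnd, Matrix.algebraMap_eq_diagonal, Matrix.mulVec_diagonal,
      Algebra.smul_def]

lemma mulVecEnd_smul (F : Type*) [Field F] {D : Type*} [DivisionRing D] [Algebra F D]
    {ι : Type*} [Fintype ι] (c : F) (Z : Matrix ι ι D) :
    Matrix.mulVecEnd F (c • Z) = c • Matrix.mulVecEnd F Z :=
  LinearMap.ext fun v => funext fun i => by
    simp [Matrix.mulVecEnd, Matrix.mulVec, dotProduct, Finset.smul_sum, smul_mul_assoc]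

lemma mulVecEnd_injective (F : Type*) [Field F] {D : Type*} [DivisionRing D] [Algebra F D]
    {ι : Type*} [Fintype ι] [DecidableEq ι] :
    Function.Injective (Matrix.mulVecEnd F (D := D) (ι := ι)) := by
  intro Z W h
  ext i j
  have := congrFun (congrArg (fun (f : Module.End F (ι → D)) => f (Pi.single j 1)) h) i
  simpa [Matrix.mulVecEnd, Matrix.mulVec_single] using this


/-- The pair-of-blocks diagonal embedding as an algebra homomorphism. -/
def pairBlockAlgHom (F : Type*) [Field F] {D : Type*} [DivisionRing D] [Algebra F D]
    {n : Type*} [Fintype n] [DecidableEq n] :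
    (Matrix n n D × Matrix n n D) →ₐ[F] Matrix (n ⊕ n) (n ⊕ n) D where
  toFun p := Matrix.fromBlocks p.1 0 0 p.2
  map_one' := Matrix.fromBlocks_one
  map_mul' p q := by simp [Matrix.fromBlocks_multiply]
  map_zero' := by simp [Matrix.fromBlocks_zero]
  map_add' p q := by simp [Matrix.fromBlocks_add]
  commutes' c := by
    ext i j
    rcases i with i | i <;> rcases j with j | j <;>
      simp [Matrix.fromBlocks, Matrix.algebraMap_matrix_apply]

lemma isSemisimpleMatrix_of_fromBlocks_diag {F : Type*} [Field F] {D : Type*} [DivisionRing D]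
    [Algebra F D] [FiniteDimensional F D] {n : Type*} [Fintype n] [DecidableEq n]
    {M N : Matrix n n D} (h : Matrix.IsSemisimpleMatrix F (Matrix.fromBlocks M 0 0 N)) :
    Matrix.IsSemisimpleMatrix F M ∧ Matrix.IsSemisimpleMatrix F N := by
  set q : Polynomial F := minpoly F (Matrix.mulVecEnd F (Matrix.fromBlocks M 0 0 N)) with hq
  have hsq : Squarefree q := h.minpoly_squarefree
  have h0 : aeval (Matrix.mulVecEnd F (Matrix.fromBlocks M 0 0 N)) q = 0 := minpoly.aeval F _
  have hmat : aeval (Matrix.fromBlocks M 0 0 N) q = 0 := by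
    apply mulVecEnd_injective F
    have := (Polynomial.aeval_algHom_apply (mulVecEndAlgHom F) (Matrix.fromBlocks M 0 0 N) q).symm
    rw [show Matrix.mulVecEnd F (aeval (Matrix.fromBlocks M 0 0 N) q)
        = aeval (Matrix.mulVecEnd F (Matrix.fromBlocks M 0 0 N)) q from this, h0]
    exact (map_zero (mulVecEndAlgHom F (D := D) (ι := n ⊕ n))).symm
  have hpair : Matrix.fromBlocks (aeval M q) 0 0 (aeval N q) = 0 := by
    have h1 : aeval ((M, N) : Matrix n n D × Matrix n n D) q
        = (aeval M q, aeval N q) := by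
      ext1
      · exact (Polynomial.aeval_algHom_apply (AlgHom.fst F _ _) (M, N) q).symm
      · exact (Polynomial.aeval_algHom_apply (AlgHom.snd F _ _) (M, N) q).symm
    have h2 := Polynomial.aeval_algHom_apply (pairBlockAlgHom F (D := D) (n := n)) (M, N) q
    rw [h1] at h2
    exact h2.symm.trans hmat
  have hM : aeval M q = 0 := by
    have := congrArg Matrix.toBlocks₁₁ hpair
    simpa [Matrix.toBlocks_fromBlocks₁₁,
      show Matrix.toBlocks₁₁ (0 : Matrix (n ⊕ n) (n ⊕ n) D) = 0 from rfl] using this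
  have hN : aeval N q = 0 := by
    have := congrArg Matrix.toBlocks₂₂ hpair
    simpa [Matrix.toBlocks_fromBlocks₂₂,
      show Matrix.toBlocks₂₂ (0 : Matrix (n ⊕ n) (n ⊕ n) D) = 0 from rfl] using this
  constructor
  · have hz : aeval ((mulVecEndAlgHom F (D := D) (ι := n)) M) q = 0 := by
      rw [Polynomial.aeval_algHom_apply, hM, map_zero]
    exact Module.End.isSemisimple_of_squarefree_aeval_eq_zero hsq hz
  · have hz : aeval ((mulVecEndAlgHom F (D := D) (ι := n)) N) q = 0 := by
      rw [Polynomial.aeval_algHom_apply, hN, map_zero]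
    exact Module.End.isSemisimple_of_squarefree_aeval_eq_zero hsq hz


theorem semisimple_blocks_of_mem_G_iota {p : ℕ} [Fact p.Prime]
    (F : Type*) [Field F] [Algebra ℚ_[p] F] [FiniteDimensional ℚ_[p] F]
    {D : Type*} [DivisionRing D] [Algebra F D] [FiniteDimensional F D]
    [Algebra.IsCentral F D]
    {m : ℕ} (hm : 1 ≤ m) (A B P Q : Matrix (Fin m) (Fin m) D)
    (g : (Matrix (Fin m ⊕ Fin m) (Fin m ⊕ Fin m) D)ˣ)
    (hg : g.val = Matrix.fromBlocks A B P Q)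
    (hι : Matrix.fromBlocks 1 0 0 (-1) * g.val * Matrix.fromBlocks 1 0 0 (-1) = (g⁻¹).val)
    (hss : Matrix.IsSemisimpleMatrix F g.val) :
    Matrix.IsSemisimpleMatrix F A ∧ Matrix.IsSemisimpleMatrix F Q ∧
      Matrix.IsSemisimpleMatrix F (B * P) ∧ Matrix.IsSemisimpleMatrix F (P * B) ∧
      Matrix.IsSemisimpleMatrix F (Matrix.fromBlocks 0 B P 0) := by
  haveI : CharZero F := charZero_of_injective_algebraMap (algebraMap ℚ_[p] F).injective
  have hinv : (g⁻¹).val = Matrix.fromBlocks A (-B) (-P) Q := by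
    rw [← hι, hg]
    simp [Matrix.fromBlocks_multiply]
  set φ := mulVecEndAlgHom F (D := D) (ι := Fin m ⊕ Fin m) with hφ
  let u : (Module.End F (Fin m ⊕ Fin m → D))ˣ := Units.map φ.toRingHom.toMonoidHom g
  have hu : (↑u : Module.End F (Fin m ⊕ Fin m → D)) = Matrix.mulVecEnd F g.val := rfl
  have huinv : (↑u⁻¹ : Module.End F (Fin m ⊕ Fin m → D))
      = Matrix.mulVecEnd F (g⁻¹).val := rfl
  have hfss : (↑u : Module.End F (Fin m ⊕ Fin m → D)).IsSemisimple := hss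
  have hmem : ∀ a ∈ Algebra.adjoin F {(↑u : Module.End F (Fin m ⊕ Fin m → D))},
      a.IsSemisimple := fun a ha => hfss.of_mem_adjoin_singleton ha
  have hself : (↑u : Module.End F (Fin m ⊕ Fin m → D))
      ∈ Algebra.adjoin F {(↑u : Module.End F (Fin m ⊕ Fin m → D))} :=
    Algebra.self_mem_adjoin_singleton F _
  have hinvmem : (↑u⁻¹ : Module.End F (Fin m ⊕ Fin m → D))
      ∈ Algebra.adjoin F {(↑u : Module.End F (Fin m ⊕ Fin m → D))} :=
    unit_inv_mem_adjoin_singleton u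
  have two_ne : (2 : F) ≠ 0 := two_ne_zero
  -- the sum g + g⁻¹ is block diagonal
  have hy : Matrix.IsSemisimpleMatrix F (Matrix.fromBlocks (A + A) 0 0 (Q + Q)) := by
    have hsum : Matrix.fromBlocks (A + A) (0 : Matrix (Fin m) (Fin m) D) 0 (Q + Q)
        = g.val + (g⁻¹).val := by
      rw [hg, hinv, Matrix.fromBlocks_add]
      simp
    show (Matrix.mulVecEnd F (Matrix.fromBlocks (A + A) 0 0 (Q + Q))).IsSemisimple
    rw [hsum, show Matrix.mulVecEnd F (g.val + (g⁻¹).val) = ↑u + ↑u⁻¹ by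
      rw [hu, huinv]; exact map_add φ _ _]
    exact hmem _ (add_mem hself hinvmem)
  obtain ⟨hA2, hQ2⟩ := isSemisimpleMatrix_of_fromBlocks_diag hy
  -- the difference g - g⁻¹ is block antidiagonal
  have hzmat : Matrix.fromBlocks (0 : Matrix (Fin m) (Fin m) D) (B + B) (P + P) 0
      = g.val - (g⁻¹).val := by
    rw [hg, hinv]
    ext i j
    rcases i with i | i <;> rcases j with j | j <;>
      simp [Matrix.fromBlocks] <;> abel
  have hzend : Matrix.mulVecEnd F (Matrix.fromBlocks (0 : Matrix (Fin m) (Fin m) D)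
      (B + B) (P + P) 0) = ↑u - ↑u⁻¹ := by
    rw [hzmat, hu, huinv]; exact map_sub φ _ _
  have hz : Matrix.IsSemisimpleMatrix F
      (Matrix.fromBlocks (0 : Matrix (Fin m) (Fin m) D) (B + B) (P + P) 0) := by
    show (Matrix.mulVecEnd F (Matrix.fromBlocks (0 : Matrix (Fin m) (Fin m) D)
      (B + B) (P + P) 0)).IsSemisimple
    rw [hzend]
    exact hmem _ (sub_mem hself hinvmem)
  -- square of the difference
  have hz2 : Matrix.IsSemisimpleMatrix F
      (Matrix.fromBlocks ((B + B) * (P + P)) 0 0 ((P + P) * (B + B))) := by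
    have hmul : Matrix.fromBlocks ((B + B) * (P + P)) (0 : Matrix (Fin m) (Fin m) D) 0
        ((P + P) * (B + B))
        = Matrix.fromBlocks (0 : Matrix (Fin m) (Fin m) D) (B + B) (P + P) 0
          * Matrix.fromBlocks (0 : Matrix (Fin m) (Fin m) D) (B + B) (P + P) 0 := by
      simp [Matrix.fromBlocks_multiply]
    show (Matrix.mulVecEnd F (Matrix.fromBlocks ((B + B) * (P + P)) 0 0
      ((P + P) * (B + B)))).IsSemisimple
    rw [hmul, show Matrix.mulVecEnd F
        (Matrix.fromBlocks (0 : Matrix (Fin m) (Fin m) D) (B + B) (P + P) 0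
          * Matrix.fromBlocks (0 : Matrix (Fin m) (Fin m) D) (B + B) (P + P) 0)
        = (↑u - ↑u⁻¹) * (↑u - ↑u⁻¹) by
      rw [← hzend]; exact map_mul φ _ _]
    exact hmem _ (mul_mem (sub_mem hself hinvmem) (sub_mem hself hinvmem))
  obtain ⟨hBP2, hPB2⟩ := isSemisimpleMatrix_of_fromBlocks_diag hz2
  -- remove the factors of 2
  have smul_end : ∀ (Z : Matrix (Fin m) (Fin m) D),
      Matrix.mulVecEnd F (Z + Z) = (2 : F) • Matrix.mulVecEnd F Z := by
    intro Z
    rw [two_smul]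
    exact map_add (mulVecEndAlgHom F (D := D) (ι := Fin m)) Z Z
  have hA : Matrix.IsSemisimpleMatrix F A := by
    have h3 : ((2 : F) • Matrix.mulVecEnd F A).IsSemisimple := by
      rw [← smul_end]; exact hA2
    exact (Module.End.IsSemisimple_smul_iff two_ne).mp h3
  have hQ : Matrix.IsSemisimpleMatrix F Q := by
    have h3 : ((2 : F) • Matrix.mulVecEnd F Q).IsSemisimple := by
      rw [← smul_end]; exact hQ2
    exact (Module.End.IsSemisimple_smul_iff two_ne).mp h3
  have hBP : Matrix.IsSemisimpleMatrix F (B * P) := by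
    have h4 : (B + B) * (P + P) = (2 : F) • ((2 : F) • (B * P)) := by
      rw [← two_smul F B, ← two_smul F P, Matrix.smul_mul, Matrix.mul_smul]
    have h5 : ((2 : F) • ((2 : F) • Matrix.mulVecEnd F (B * P))).IsSemisimple := by
      have h6 : Matrix.mulVecEnd F ((B + B) * (P + P))
          = (2 : F) • ((2 : F) • Matrix.mulVecEnd F (B * P)) := by
        rw [h4, mulVecEnd_smul, mulVecEnd_smul]
      rw [← h6]; exact hBP2
    exact (Module.End.IsSemisimple_smul_iff two_ne).mp
      ((Module.End.IsSemisimple_smul_iff two_ne).mp h5)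
  have hPB : Matrix.IsSemisimpleMatrix F (P * B) := by
    have h4 : (P + P) * (B + B) = (2 : F) • ((2 : F) • (P * B)) := by
      rw [← two_smul F P, ← two_smul F B, Matrix.smul_mul, Matrix.mul_smul]
    have h5 : ((2 : F) • ((2 : F) • Matrix.mulVecEnd F (P * B))).IsSemisimple := by
      have h6 : Matrix.mulVecEnd F ((P + P) * (B + B))
          = (2 : F) • ((2 : F) • Matrix.mulVecEnd F (P * B)) := by
        rw [h4, mulVecEnd_smul, mulVecEnd_smul]
      rw [← h6]; exact hPB2
    exact (Module.End.IsSemisimple_smul_iff two_ne).mp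
      ((Module.End.IsSemisimple_smul_iff two_ne).mp h5)
  have hBPblock : Matrix.IsSemisimpleMatrix F (Matrix.fromBlocks 0 B P 0) := by
    have h4 : Matrix.fromBlocks (0 : Matrix (Fin m) (Fin m) D) (B + B) (P + P) 0
        = (2 : F) • Matrix.fromBlocks (0 : Matrix (Fin m) (Fin m) D) B P 0 := by
      rw [Matrix.fromBlocks_smul]
      simp [two_smul]
    have h5 : ((2 : F) • Matrix.mulVecEnd F
        (Matrix.fromBlocks (0 : Matrix (Fin m) (Fin m) D) B P 0)).IsSemisimple := by
      have h6 : Matrix.mulVecEnd F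
            (Matrix.fromBlocks (0 : Matrix (Fin m) (Fin m) D) (B + B) (P + P) 0)
          = (2 : F) • Matrix.mulVecEnd F
            (Matrix.fromBlocks (0 : Matrix (Fin m) (Fin m) D) B P 0) := by
        rw [h4, mulVecEnd_smul]
      rw [← h6]; exact hz
    exact (Module.End.IsSemisimple_smul_iff two_ne).mp h5
  exact ⟨hA, hQ, hBP, hPB, hBPblock⟩
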